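/- If (X₀, X₁, …, X_n) are negatively associated random variables with X₀ ∈ [0,1] almost surely, and Y is a Bernoulli random variable that, conditionally on X₀ = x, equals 1 with probability x independently of everything else, then (Y, X₁, …, X_n) are negatively associated. -/

import Mathlib

open MeasureTheory

/-- Random variables `Z i` (taking values in ℝ) are negatively associated under
measure `μ`: for all disjoint finite index sets `S, T` and all coordinatewise
monotone functions `f, g` depending only on coordinates in `S` (resp. `T`),
`E[f·g] ≤ E[f]·E[g]`. -/
def NegAssoc {Ω ι : Type*} [MeasurableSpace Ω] (μ : Measure Ω) (Z : ι → Ω → ℝ) : Prop :=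
  ∀ S T : Finset ι, Disjoint S T →
    ∀ f g : (ι → ℝ) → ℝ, Monotone f → Monotone g →
      (∀ a b : ι → ℝ, (∀ i ∈ S, a i = b i) → f a = f b) →
      (∀ a b : ι → ℝ, (∀ i ∈ T, a i = b i) → g a = g b) →
      ∫ ω, f (fun i => Z i ω) * g (fun i => Z i ω) ∂μ ≤
        (∫ ω, f (fun i => Z i ω) ∂μ) * ∫ ω, g (fun i => Z i ω) ∂μ

namespace NAaux

open Set

/-! ### Elementary real lemmas -/

noncomputable def rsgn (t : ℝ) : ℝ := if 0 < t then 1 else if t < 0 then -1 else 0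

lemma rsgn_measurable : Measurable rsgn := by
  unfold rsgn
  exact Measurable.ite measurableSet_Ioi measurable_const
    (Measurable.ite measurableSet_Iio measurable_const measurable_const)

lemma rsgn_abs_le (t : ℝ) : ‖rsgn t‖ ≤ 1 := by
  unfold rsgn
  rcases lt_trichotomy 0 t with h | h | h
  · rw [if_pos h]; norm_num
  · rw [if_neg (by linarith), if_neg (by linarith)]; norm_num
  · rw [if_neg (by linarith), if_pos h]; norm_num

lemma rsgn_mul_abs (a g : ℝ) : rsgn g * |a * g| = |a| * g := by
  unfold rsgn
  rcases lt_trichotomy 0 g with h | h | h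
  · rw [if_pos h, one_mul, abs_mul, abs_of_pos h]
  · rw [← h]; simp
  · rw [if_neg (by linarith), if_pos h, abs_mul, abs_of_neg h]; ring

lemma max_mul_form (a g : ℝ) : max a 0 * g = (a * g + rsgn g * |a * g|) / 2 := by
  rw [rsgn_mul_abs]
  rcases le_total a 0 with h | h
  · rw [max_eq_right h, abs_of_nonpos h]; ring
  · rw [max_eq_left h, abs_of_nonneg h]; ring

lemma min_mul_form (a g : ℝ) : min a 0 * g = (a * g - rsgn g * |a * g|) / 2 := by
  rw [rsgn_mul_abs]
  rcases le_total a 0 with h | h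
  · rw [min_eq_left h, abs_of_nonpos h]; ring
  · rw [min_eq_right h, abs_of_nonneg h]; ring

lemma max_min_add (a : ℝ) : max a 0 + min a 0 = a := by
  rw [max_add_min]; ring

lemma abs_eq_max_sub_min (a : ℝ) : |a| = max a 0 - min a 0 := by
  rcases le_total a 0 with h | h
  · rw [abs_of_nonpos h, max_eq_right h, min_eq_left h]; ring
  · rw [abs_of_nonneg h, max_eq_left h, min_eq_right h]; ring

/-! ### The clamp function -/

noncomputable def cl (t : ℝ) : ℝ := max 0 (min t 1)

lemma cl_mono : Monotone cl := fun _ _ h => max_le_max le_rfl (min_le_min h le_rfl)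

lemma cl_nonneg (t : ℝ) : 0 ≤ cl t := le_max_left _ _

lemma cl_le_one (t : ℝ) : cl t ≤ 1 := max_le zero_le_one (min_le_right _ _)

lemma cl_eq {t : ℝ} (h : t ∈ Set.Icc (0:ℝ) 1) : cl t = t := by
  unfold cl; rw [min_eq_left h.2, max_eq_right h.1]

lemma cl_measurable : Measurable cl :=
  measurable_const.max (measurable_id.min measurable_const)

/-! ### Coordinate updates and monotone extensions -/

variable {n : ℕ}

def u1 (a : Fin (n+1) → ℝ) : Fin (n+1) → ℝ := fun i => if i = 0 then 1 else a i

def u0 (a : Fin (n+1) → ℝ) : Fin (n+1) → ℝ := fun i => if i = 0 then 0 else a i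

lemma u1_mono : Monotone (u1 (n := n)) := by
  intro a b h i
  unfold u1
  by_cases h0 : i = 0
  · simp [h0]
  · simp only [if_neg h0]; exact h i

lemma u0_mono : Monotone (u0 (n := n)) := by
  intro a b h i
  unfold u0
  by_cases h0 : i = 0
  · simp [h0]
  · simp only [if_neg h0]; exact h i

lemma u0_le_u1 (a : Fin (n+1) → ℝ) : u0 a ≤ u1 a := by
  intro i
  unfold u0 u1
  by_cases h0 : i = 0
  · simp [h0]
  · simp [h0]

noncomputable def EXT (q : (Fin (n+1) → ℝ) → ℝ) : (Fin (n+1) → ℝ) → ℝ :=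
  fun a => cl (a 0) * q (u1 a) + (1 - cl (a 0)) * q (u0 a)

noncomputable def MPf (q : (Fin (n+1) → ℝ) → ℝ) : (Fin (n+1) → ℝ) → ℝ :=
  fun a => cl (a 0) * max (q (u1 a)) 0

noncomputable def MMf (q : (Fin (n+1) → ℝ) → ℝ) : (Fin (n+1) → ℝ) → ℝ :=
  fun a => (1 - cl (a 0)) * min (q (u0 a)) 0

lemma EXT_mono {q : (Fin (n+1) → ℝ) → ℝ} (hq : Monotone q) : Monotone (EXT q) := by
  intro a b hab
  have h1 : q (u1 a) ≤ q (u1 b) := hq (u1_mono hab)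
  have h0 : q (u0 a) ≤ q (u0 b) := hq (u0_mono hab)
  have h01 : q (u0 b) ≤ q (u1 b) := hq (u0_le_u1 b)
  have hc : cl (a 0) ≤ cl (b 0) := cl_mono (hab 0)
  have ha0 := cl_nonneg (a 0)
  have ha1 := cl_le_one (a 0)
  have hb0 := cl_nonneg (b 0)
  have hb1 := cl_le_one (b 0)
  unfold EXT
  nlinarith [mul_le_mul_of_nonneg_left h1 ha0,
    mul_le_mul_of_nonneg_left h0 (by linarith : (0:ℝ) ≤ 1 - cl (a 0)),
    mul_le_mul_of_nonneg_right hc (by linarith : (0:ℝ) ≤ q (u1 b) - q (u0 b))]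

lemma MPf_mono {q : (Fin (n+1) → ℝ) → ℝ} (hq : Monotone q) : Monotone (MPf q) := by
  intro a b hab
  unfold MPf
  exact mul_le_mul (cl_mono (hab 0)) (max_le_max (hq (u1_mono hab)) le_rfl)
    (le_max_right _ _) (cl_nonneg _)

lemma MMf_mono {q : (Fin (n+1) → ℝ) → ℝ} (hq : Monotone q) : Monotone (MMf q) := by
  intro a b hab
  unfold MMf
  have h0 : q (u0 a) ≤ q (u0 b) := hq (u0_mono hab)
  have hminab : min (q (u0 a)) 0 ≤ min (q (u0 b)) 0 := min_le_min h0 le_rfl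
  have hminb : min (q (u0 b)) 0 ≤ 0 := min_le_right _ _
  have hc : cl (a 0) ≤ cl (b 0) := cl_mono (hab 0)
  have ha1 := cl_le_one (a 0)
  have hb1 := cl_le_one (b 0)
  have ha0 := cl_nonneg (a 0)
  have hb0 := cl_nonneg (b 0)
  nlinarith [mul_le_mul_of_nonneg_left hminab (by linarith : (0:ℝ) ≤ 1 - cl (a 0))]

section dets

variable {S' : Finset (Fin (n+1))}

lemma u1_det {a b : Fin (n+1) → ℝ} (hab : ∀ i ∈ S', a i = b i) :
    ∀ i ∈ S', u1 a i = u1 b i := by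
  intro i hi
  unfold u1
  by_cases h0 : i = 0
  · simp [h0]
  · simp only [if_neg h0]; exact hab i hi

lemma u0_det {a b : Fin (n+1) → ℝ} (hab : ∀ i ∈ S', a i = b i) :
    ∀ i ∈ S', u0 a i = u0 b i := by
  intro i hi
  unfold u0
  by_cases h0 : i = 0
  · simp [h0]
  · simp only [if_neg h0]; exact hab i hi

lemma EXT_det (h0 : (0 : Fin (n+1)) ∈ S') {q : (Fin (n+1) → ℝ) → ℝ}
    (hq : ∀ a b, (∀ i ∈ S', a i = b i) → q a = q b) :
    ∀ a b, (∀ i ∈ S', a i = b i) → EXT q a = EXT q b := by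
  intro a b hab
  unfold EXT
  rw [hab 0 h0, hq (u1 a) (u1 b) (u1_det hab), hq (u0 a) (u0 b) (u0_det hab)]

lemma MPf_det (h0 : (0 : Fin (n+1)) ∈ S') {q : (Fin (n+1) → ℝ) → ℝ}
    (hq : ∀ a b, (∀ i ∈ S', a i = b i) → q a = q b) :
    ∀ a b, (∀ i ∈ S', a i = b i) → MPf q a = MPf q b := by
  intro a b hab
  unfold MPf
  rw [hab 0 h0, hq (u1 a) (u1 b) (u1_det hab)]

lemma MMf_det (h0 : (0 : Fin (n+1)) ∈ S') {q : (Fin (n+1) → ℝ) → ℝ}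
    (hq : ∀ a b, (∀ i ∈ S', a i = b i) → q a = q b) :
    ∀ a b, (∀ i ∈ S', a i = b i) → MMf q a = MMf q b := by
  intro a b hab
  unfold MMf
  rw [hab 0 h0, hq (u0 a) (u0 b) (u0_det hab)]

end dets

/-! ### The uniform measure on `[0,1]` -/

noncomputable def ν01 : Measure ℝ := volume.restrict (Set.Icc (0:ℝ) 1)

instance : IsProbabilityMeasure ν01 := by
  constructor
  rw [ν01, Measure.restrict_apply_univ, Real.volume_Icc]
  norm_num

lemma nu_Iic {x : ℝ} (hx : x ∈ Set.Icc (0:ℝ) 1) : (ν01 (Set.Iic x)).toReal = x := by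
  rw [ν01, Measure.restrict_apply measurableSet_Iic]
  have h : Set.Iic x ∩ Set.Icc 0 1 = Set.Icc 0 x := by
    ext u
    simp only [Set.mem_inter_iff, Set.mem_Iic, Set.mem_Icc]
    constructor
    · rintro ⟨h1, h2, _⟩; exact ⟨h2, h1⟩
    · rintro ⟨h1, h2⟩; exact ⟨h2, h1, le_trans h2 hx.2⟩
  rw [h, Real.volume_Icc, ENNReal.toReal_ofReal (by linarith [hx.1])]
  ring

lemma ite_indicator_form (x c₁ c₀ : ℝ) : (fun u : ℝ => if u ≤ x then c₁ else c₀)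
    = fun u => (Set.Iic x).indicator (fun _ => c₁ - c₀) u + c₀ := by
  funext u
  by_cases h : u ≤ x
  · rw [if_pos h, Set.indicator_of_mem (by simpa using h)]; ring
  · rw [if_neg h, Set.indicator_of_notMem (by simpa using h)]; ring

lemma slice_integrable (x c₁ c₀ : ℝ) :
    Integrable (fun u => if u ≤ x then c₁ else c₀) ν01 := by
  rw [ite_indicator_form]
  exact ((integrable_const (c₁ - c₀)).indicator measurableSet_Iic).add (integrable_const c₀)

lemma slice_integral {x : ℝ} (hx : x ∈ Set.Icc (0:ℝ) 1) (c₁ c₀ : ℝ) :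
    ∫ u, (if u ≤ x then c₁ else c₀) ∂ν01 = x * c₁ + (1 - x) * c₀ := by
  rw [ite_indicator_form, integral_add
    (((integrable_const (c₁ - c₀)).indicator measurableSet_Iic)) (integrable_const c₀),
    integral_indicator_const _ measurableSet_Iic, integral_const]
  simp only [measureReal_def, measure_univ, ENNReal.toReal_one, one_smul, smul_eq_mul, nu_Iic hx]
  ring

/-! ### Transfer along the first projection -/

section fst

variable {Ω : Type*} [MeasurableSpace Ω] {μ : Measure Ω} [IsProbabilityMeasure μ]

lemma map_fst_eq : (μ.prod ν01).map Prod.fst = μ := by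
  rw [Measure.map_fst_prod]
  simp

lemma aesm_fst_iff {h : Ω → ℝ} :
    AEStronglyMeasurable (fun p : Ω × ℝ => h p.1) (μ.prod ν01) ↔
      AEStronglyMeasurable h μ := by
  constructor
  · rintro ⟨k, hk, hae⟩
    have h2 := MeasureTheory.Measure.ae_ae_of_ae_prod hae
    refine ⟨fun ω => ∫ u, k (ω, u) ∂ν01, hk.integral_prod_right', ?_⟩
    filter_upwards [h2] with ω hω
    have he : ∫ u, k (ω, u) ∂ν01 = ∫ _u, h ω ∂ν01 :=
      integral_congr_ae (hω.mono fun u hu => hu.symm)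
    rw [he, integral_const]
    simp
  · intro hh
    exact hh.comp_quasiMeasurePreserving Measure.quasiMeasurePreserving_fst

lemma integral_fst_eq {h : Ω → ℝ} :
    ∫ p, h p.1 ∂(μ.prod ν01) = ∫ ω, h ω ∂μ := by
  by_cases hh : AEStronglyMeasurable h μ
  · have h2 := MeasureTheory.integral_map (μ := μ.prod ν01) (φ := Prod.fst)
      measurable_fst.aemeasurable (f := h) (by rwa [map_fst_eq])
    rw [map_fst_eq] at h2
    exact h2.symm
  · rw [integral_non_aestronglyMeasurable (by rwa [aesm_fst_iff]),
      integral_non_aestronglyMeasurable hh]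

lemma ae_fst {Q : Ω → Prop} (hQ : ∀ᵐ ω ∂μ, Q ω) :
    ∀ᵐ p : Ω × ℝ ∂(μ.prod ν01), Q p.1 := by
  apply MeasureTheory.ae_of_ae_map (measurable_fst.aemeasurable)
  rwa [map_fst_eq]

lemma ae_snd_mem : ∀ᵐ p : Ω × ℝ ∂(μ.prod ν01), p.2 ∈ Set.Icc (0:ℝ) 1 := by
  apply MeasureTheory.ae_of_ae_map (measurable_snd.aemeasurable)
  rw [Measure.map_snd_prod]
  simp only [measure_univ, one_smul]
  exact ae_restrict_mem measurableSet_Icc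

lemma ae_snd_ne : ∀ᵐ p : Ω × ℝ ∂(μ.prod ν01), p.2 ≠ 0 := by
  apply MeasureTheory.ae_of_ae_map (p := fun u : ℝ => u ≠ 0) (measurable_snd.aemeasurable)
  rw [Measure.map_snd_prod]
  simp only [measure_univ, one_smul]
  rw [ae_iff]
  have h : {u : ℝ | ¬ u ≠ 0} = {(0:ℝ)} := by ext u; simp
  rw [h, ν01, Measure.restrict_apply (measurableSet_singleton 0)]
  refine le_antisymm ?_ zero_le
  calc volume ({(0:ℝ)} ∩ Set.Icc 0 1) ≤ volume {(0:ℝ)} :=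
        measure_mono Set.inter_subset_left
    _ = 0 := Real.volume_singleton

lemma slice_extract {W : Ω × ℝ → ℝ} (hW : Integrable W (μ.prod ν01)) {w : Ω → ℝ}
    (hw : ∀ᵐ ω ∂μ, (∫ u, W (ω, u) ∂ν01) = w ω) :
    Integrable w μ ∧ ∫ ω, w ω ∂μ = ∫ p, W p ∂(μ.prod ν01) := by
  refine ⟨(hW.integral_prod_left).congr hw, ?_⟩
  rw [MeasureTheory.integral_prod _ hW]
  exact (integral_congr_ae hw).symm

end fst

/-! ### Consequences of NA with Bochner conventions -/

lemma key_int {Ω ι : Type*} [MeasurableSpace Ω] (μ : Measure Ω) [IsProbabilityMeasure μ]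
    {X : ι → Ω → ℝ} (hNA : NegAssoc μ X) {S T : Finset ι} (hST : Disjoint S T)
    {p q : (ι → ℝ) → ℝ} (hp : Monotone p) (hq : Monotone q)
    (hpS : ∀ a b, (∀ i ∈ S, a i = b i) → p a = p b)
    (hqT : ∀ a b, (∀ i ∈ T, a i = b i) → q a = q b)
    (hP : Integrable (fun ω => p (fun i => X i ω)) μ)
    (hQ : Integrable (fun ω => q (fun i => X i ω)) μ) :
    Integrable (fun ω => p (fun i => X i ω) * q (fun i => X i ω)) μ := by
  by_contra hni
  set c : ℝ := (∫ ω, p (fun i => X i ω) ∂μ) - 1 with hc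
  set d : ℝ := (∫ ω, q (fun i => X i ω) ∂μ) + 1 with hd
  have hna2 : ∫ ω, (p (fun i => X i ω) - c) * (q (fun i => X i ω) - d) ∂μ ≤
      (∫ ω, (p (fun i => X i ω) - c) ∂μ) * ∫ ω, (q (fun i => X i ω) - d) ∂μ :=
    hNA S T hST (fun a => p a - c) (fun a => q a - d)
      (fun a b hab => sub_le_sub_right (hp hab) c)
      (fun a b hab => sub_le_sub_right (hq hab) d)
      (fun a b hab => show p a - c = p b - c by rw [hpS a b hab])
      (fun a b hab => show q a - d = q b - d by rw [hqT a b hab])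
  have hni2 : ¬ Integrable (fun ω => (p (fun i => X i ω) - c) * (q (fun i => X i ω) - d)) μ := by
    intro h2
    apply hni
    have heq : (fun ω => p (fun i => X i ω) * q (fun i => X i ω))
        = fun ω => (p (fun i => X i ω) - c) * (q (fun i => X i ω) - d)
            + d * p (fun i => X i ω) + c * q (fun i => X i ω) - c * d := by
      funext ω; ring
    rw [heq]
    exact ((h2.add (hP.const_mul d)).add (hQ.const_mul c)).sub (integrable_const (c * d))
  rw [integral_undef hni2, integral_sub hP (integrable_const c),
    integral_sub hQ (integrable_const d), integral_const, integral_const] at hna2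
  simp only [measureReal_def, measure_univ, ENNReal.toReal_one, one_smul, smul_eq_mul, one_mul] at hna2
  rw [hc, hd] at hna2
  nlinarith [hna2]

lemma shift_zero {Ω ι : Type*} [MeasurableSpace Ω] (μ : Measure Ω) [IsProbabilityMeasure μ]
    {X : ι → Ω → ℝ} (hNA : NegAssoc μ X) {S T : Finset ι} (hST : Disjoint S T)
    {p q : (ι → ℝ) → ℝ} (hp : Monotone p) (hq : Monotone q)
    (hpS : ∀ a b, (∀ i ∈ S, a i = b i) → p a = p b)
    (hqT : ∀ a b, (∀ i ∈ T, a i = b i) → q a = q b)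
    (hPni : ¬ Integrable (fun ω => p (fun i => X i ω)) μ)
    (hQ : Integrable (fun ω => q (fun i => X i ω)) μ)
    (hPQ : Integrable (fun ω => p (fun i => X i ω) * q (fun i => X i ω)) μ) :
    ∫ ω, q (fun i => X i ω) ∂μ = 0 := by
  by_contra hb
  set b : ℝ := ∫ ω, q (fun i => X i ω) ∂μ with hbdef
  set K : ℝ := ∫ ω, p (fun i => X i ω) * q (fun i => X i ω) ∂μ with hK
  set c : ℝ := (1 - K) / b with hcdef
  have hna2 : ∫ ω, (p (fun i => X i ω) + c) * q (fun i => X i ω) ∂μ ≤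
      (∫ ω, (p (fun i => X i ω) + c) ∂μ) * ∫ ω, q (fun i => X i ω) ∂μ :=
    hNA S T hST (fun a => p a + c) q
      (fun a b hab => add_le_add (hp hab) (le_refl c)) hq
      (fun a b hab => show p a + c = p b + c by rw [hpS a b hab]) hqT
  have hL : ∫ ω, (p (fun i => X i ω) + c) * q (fun i => X i ω) ∂μ = K + c * b := by
    have heq : (fun ω => (p (fun i => X i ω) + c) * q (fun i => X i ω))
        = fun ω => p (fun i => X i ω) * q (fun i => X i ω) + c * q (fun i => X i ω) := by
      funext ω; ring
    rw [heq, integral_add hPQ (hQ.const_mul c), integral_const_mul]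
  have hR : ¬ Integrable (fun ω => p (fun i => X i ω) + c) μ := by
    intro h2
    apply hPni
    have heq : (fun ω => p (fun i => X i ω)) = fun ω => (p (fun i => X i ω) + c) - c := by
      funext ω; ring
    rw [heq]
    exact h2.sub (integrable_const c)
  rw [hL, integral_undef hR, zero_mul] at hna2
  have hcb : c * b = 1 - K := div_mul_cancel₀ _ hb
  rw [hcb] at hna2
  linarith

/-! ### Extra form lemmas -/

lemma max_form (a : ℝ) : max a 0 = (a + |a|) / 2 := by
  rcases le_total a 0 with h | h
  · rw [max_eq_right h, abs_of_nonpos h]; ring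
  · rw [max_eq_left h, abs_of_nonneg h]; ring

lemma min_form (a : ℝ) : min a 0 = (a - |a|) / 2 := by
  rcases le_total a 0 with h | h
  · rw [min_eq_left h, abs_of_nonpos h]; ring
  · rw [min_eq_right h, abs_of_nonneg h]; ring

/-! ### The main lemma -/

noncomputable def Zb {Ω : Type*} {n : ℕ} (X : Fin (n+1) → Ω → ℝ) : Fin (n+1) → Ω × ℝ → ℝ :=
  fun i p => if i = 0 then (if p.2 ≤ X 0 p.1 then 1 else 0) else X i p.1

set_option maxHeartbeats 2000000 in
lemma main_aux {Ω : Type*} [MeasurableSpace Ω] (μ : Measure Ω) [IsProbabilityMeasure μ]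
    (n : ℕ) (X : Fin (n + 1) → Ω → ℝ) (hXmeas : ∀ i, Measurable (X i))
    (hNA : NegAssoc μ X) (hX0 : ∀ᵐ ω ∂μ, X 0 ω ∈ Set.Icc (0 : ℝ) 1)
    (S T : Finset (Fin (n+1))) (hST : Disjoint S T) (h0T : (0 : Fin (n+1)) ∉ T)
    (f g : (Fin (n+1) → ℝ) → ℝ) (hf : Monotone f) (hg : Monotone g)
    (hfS : ∀ a b, (∀ i ∈ S, a i = b i) → f a = f b)
    (hgT : ∀ a b, (∀ i ∈ T, a i = b i) → g a = g b) :
    ∫ pt, f (fun i => Zb X i pt) * g (fun i => Zb X i pt) ∂(μ.prod ν01) ≤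
      (∫ pt, f (fun i => Zb X i pt) ∂(μ.prod ν01)) *
        ∫ pt, g (fun i => Zb X i pt) ∂(μ.prod ν01) := by
  classical
  set P : Measure (Ω × ℝ) := μ.prod ν01 with hPdef
  set S' : Finset (Fin (n+1)) := insert 0 S with hS'def
  have h0S' : (0 : Fin (n+1)) ∈ S' := Finset.mem_insert_self _ _
  have hS'T : Disjoint S' T := Finset.disjoint_insert_left.mpr ⟨h0T, hST⟩
  have hfS' : ∀ a b, (∀ i ∈ S', a i = b i) → f a = f b :=
    fun a b hab => hfS a b fun i hi => hab i (Finset.mem_insert_of_mem hi)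
  have hfS'max : ∀ a b, (∀ i ∈ S', a i = b i) → max (f a) 0 = max (f b) 0 :=
    fun a b hab => by rw [hfS' a b hab]
  have hfS'min : ∀ a b, (∀ i ∈ S', a i = b i) → min (f a) 0 = min (f b) 0 :=
    fun a b hab => by rw [hfS' a b hab]
  have hfmax : Monotone (fun a => max (f a) 0) := fun a b hab => max_le_max (hf hab) le_rfl
  have hfmin : Monotone (fun a => min (f a) 0) := fun a b hab => min_le_min (hf hab) le_rfl
  set F1 : Ω → ℝ := fun ω => f (u1 (fun i => X i ω)) with hF1def
  set F0 : Ω → ℝ := fun ω => f (u0 (fun i => X i ω)) with hF0def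
  set G : Ω → ℝ := fun ω => g (fun i => X i ω) with hGdef
  set C : Ω → ℝ := fun ω => EXT f (fun i => X i ω) with hCdef
  set Np : Ω → ℝ := fun ω => EXT (fun a => max (f a) 0) (fun i => X i ω) with hNpdef
  set Nm : Ω → ℝ := fun ω => EXT (fun a => min (f a) 0) (fun i => X i ω) with hNmdef
  set A1 : Ω → ℝ := fun ω => MPf f (fun i => X i ω) with hA1def
  set B0 : Ω → ℝ := fun ω => MMf f (fun i => X i ω) with hB0def
  set WA : Ω × ℝ → ℝ := fun pt => if pt.2 ≤ X 0 pt.1 then F1 pt.1 else F0 pt.1 with hWAdef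
  set WAB : Ω × ℝ → ℝ :=
    fun pt => if pt.2 ≤ X 0 pt.1 then F1 pt.1 * G pt.1 else F0 pt.1 * G pt.1 with hWABdef
  have hCeq : ∀ ω, C ω = cl (X 0 ω) * F1 ω + (1 - cl (X 0 ω)) * F0 ω := fun ω => rfl
  have hNpeq : ∀ ω, Np ω = cl (X 0 ω) * max (F1 ω) 0 + (1 - cl (X 0 ω)) * max (F0 ω) 0 :=
    fun ω => rfl
  have hNmeq : ∀ ω, Nm ω = cl (X 0 ω) * min (F1 ω) 0 + (1 - cl (X 0 ω)) * min (F0 ω) 0 :=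
    fun ω => rfl
  have hA1eq : ∀ ω, A1 ω = cl (X 0 ω) * max (F1 ω) 0 := fun ω => rfl
  have hB0eq : ∀ ω, B0 ω = (1 - cl (X 0 ω)) * min (F0 ω) 0 := fun ω => rfl
  -- identify the integrands
  have hAfp : ∀ pt : Ω × ℝ, f (fun i => Zb X i pt) = WA pt := by
    intro pt
    show f (fun i => Zb X i pt) = if pt.2 ≤ X 0 pt.1 then F1 pt.1 else F0 pt.1
    by_cases hc : pt.2 ≤ X 0 pt.1
    · rw [if_pos hc]
      show f (fun i => Zb X i pt) = f (u1 (fun i => X i pt.1))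
      congr 1
      funext i
      by_cases h0 : i = 0 <;> simp [Zb, u1, h0, hc]
    · rw [if_neg hc]
      show f (fun i => Zb X i pt) = f (u0 (fun i => X i pt.1))
      congr 1
      funext i
      by_cases h0 : i = 0 <;> simp [Zb, u0, h0, hc]
  have hBfp : ∀ pt : Ω × ℝ, g (fun i => Zb X i pt) = G pt.1 := by
    intro pt
    apply hgT
    intro i hi
    have h0 : i ≠ 0 := fun h => h0T (h ▸ hi)
    simp [Zb, h0]
  have egoal1 : ∫ pt, f (fun i => Zb X i pt) * g (fun i => Zb X i pt) ∂P
      = ∫ pt, WAB pt ∂P := by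
    apply integral_congr_ae
    apply Filter.Eventually.of_forall
    intro pt
    show f (fun i => Zb X i pt) * g (fun i => Zb X i pt) = WAB pt
    rw [hAfp pt, hBfp pt]
    show (if pt.2 ≤ X 0 pt.1 then F1 pt.1 else F0 pt.1) * G pt.1
      = if pt.2 ≤ X 0 pt.1 then F1 pt.1 * G pt.1 else F0 pt.1 * G pt.1
    by_cases hc : pt.2 ≤ X 0 pt.1 <;> simp [hc]
  have egoal2 : ∫ pt, f (fun i => Zb X i pt) ∂P = ∫ pt, WA pt ∂P :=
    integral_congr_ae (Filter.Eventually.of_forall hAfp)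
  have egoal3 : ∫ pt, g (fun i => Zb X i pt) ∂P = ∫ ω, G ω ∂μ := by
    have h1 : (fun pt : Ω × ℝ => g (fun i => Zb X i pt)) = fun pt => G pt.1 := funext hBfp
    rw [h1]
    exact integral_fst_eq
  rw [egoal1, egoal2, egoal3]
  -- hNA applied to the extension
  have hnaC : ∫ ω, C ω * G ω ∂μ ≤ (∫ ω, C ω ∂μ) * ∫ ω, G ω ∂μ :=
    hNA S' T hS'T (EXT f) g (EXT_mono hf) hg (EXT_det h0S' hfS') hgT
  -- slice helper
  have hslice : ∀ (c1 c0 w : Ω → ℝ),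
      (∀ᵐ ω ∂μ, X 0 ω ∈ Set.Icc (0:ℝ) 1 → X 0 ω * c1 ω + (1 - X 0 ω) * c0 ω = w ω) →
      Integrable (fun pt : Ω × ℝ => if pt.2 ≤ X 0 pt.1 then c1 pt.1 else c0 pt.1) P →
      Integrable w μ ∧ ∫ ω, w ω ∂μ
        = ∫ pt, (if pt.2 ≤ X 0 pt.1 then c1 pt.1 else c0 pt.1 : ℝ) ∂P := by
    intro c1 c0 w hweq hint
    apply slice_extract hint
    filter_upwards [hX0, hweq] with ω hx hw
    show (∫ u, (if u ≤ X 0 ω then c1 ω else c0 ω) ∂ν01) = w ω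
    rw [slice_integral hx]
    exact hw hx
  have hDaesm : AEStronglyMeasurable (fun pt : Ω × ℝ => if pt.2 ≤ X 0 pt.1 then (1:ℝ) else 0) P := by
    apply Measurable.aestronglyMeasurable
    exact Measurable.ite (measurableSet_le measurable_snd ((hXmeas 0).comp measurable_fst))
      measurable_const measurable_const
  have hGsgn : Integrable G μ → AEStronglyMeasurable (fun pt : Ω × ℝ => rsgn (G pt.1)) P := by
    intro hGint
    obtain ⟨k, hk, hae⟩ := hGint.aestronglyMeasurable
    have h1 : AEStronglyMeasurable (fun ω => rsgn (G ω)) μ :=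
      ⟨fun ω => rsgn (k ω), (rsgn_measurable.comp hk.measurable).stronglyMeasurable,
        hae.mono fun ω hω => show rsgn (G ω) = rsgn (k ω) by rw [hω]⟩
    exact h1.comp_quasiMeasurePreserving Measure.quasiMeasurePreserving_fst
  -- integrability of the four product slices, given WAB integrable and G integrable
  have hWint : Integrable WAB P → Integrable G μ →
      (Integrable (fun pt : Ω × ℝ => if pt.2 ≤ X 0 pt.1 then max (F1 pt.1) 0 * G pt.1
          else max (F0 pt.1) 0 * G pt.1) P
      ∧ Integrable (fun pt : Ω × ℝ => if pt.2 ≤ X 0 pt.1 then min (F1 pt.1) 0 * G pt.1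
          else min (F0 pt.1) 0 * G pt.1) P
      ∧ Integrable (fun pt : Ω × ℝ => if pt.2 ≤ X 0 pt.1 then max (F1 pt.1) 0 * G pt.1
          else 0) P
      ∧ Integrable (fun pt : Ω × ℝ => if pt.2 ≤ X 0 pt.1 then 0
          else min (F0 pt.1) 0 * G pt.1) P) := by
    intro hRint hGint
    have hsgnP := hGsgn hGint
    have hRsgn : Integrable (fun pt : Ω × ℝ => rsgn (G pt.1) * |WAB pt|) P :=
      Integrable.bdd_mul hRint.abs hsgnP (c := 1) (Filter.Eventually.of_forall fun pt => rsgn_abs_le _)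
    have hW1 : Integrable (fun pt : Ω × ℝ => (WAB pt + rsgn (G pt.1) * |WAB pt|) / 2) P :=
      (hRint.add hRsgn).div_const 2
    have hW2 : Integrable (fun pt : Ω × ℝ => (WAB pt - rsgn (G pt.1) * |WAB pt|) / 2) P :=
      (hRint.sub hRsgn).div_const 2
    have hDbd : ∀ pt : Ω × ℝ, ‖(if pt.2 ≤ X 0 pt.1 then (1:ℝ) else 0)‖ ≤ 1 := by
      intro pt; by_cases hc : pt.2 ≤ X 0 pt.1 <;> simp [hc]
    have hDbd' : ∀ pt : Ω × ℝ, ‖(1 - if pt.2 ≤ X 0 pt.1 then (1:ℝ) else 0)‖ ≤ 1 := by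
      intro pt; by_cases hc : pt.2 ≤ X 0 pt.1 <;> simp [hc]
    refine ⟨?_, ?_, ?_, ?_⟩
    · have hid : (fun pt : Ω × ℝ => if pt.2 ≤ X 0 pt.1 then max (F1 pt.1) 0 * G pt.1
          else max (F0 pt.1) 0 * G pt.1) = fun pt => (WAB pt + rsgn (G pt.1) * |WAB pt|) / 2 := by
        funext pt
        show _ = ((if pt.2 ≤ X 0 pt.1 then F1 pt.1 * G pt.1 else F0 pt.1 * G pt.1)
          + rsgn (G pt.1) * |(if pt.2 ≤ X 0 pt.1 then F1 pt.1 * G pt.1 else F0 pt.1 * G pt.1)|) / 2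
        by_cases hc : pt.2 ≤ X 0 pt.1
        · simp only [if_pos hc]; exact max_mul_form _ _
        · simp only [if_neg hc]; exact max_mul_form _ _
      rw [hid]; exact hW1
    · have hid : (fun pt : Ω × ℝ => if pt.2 ≤ X 0 pt.1 then min (F1 pt.1) 0 * G pt.1
          else min (F0 pt.1) 0 * G pt.1) = fun pt => (WAB pt - rsgn (G pt.1) * |WAB pt|) / 2 := by
        funext pt
        show _ = ((if pt.2 ≤ X 0 pt.1 then F1 pt.1 * G pt.1 else F0 pt.1 * G pt.1)
          - rsgn (G pt.1) * |(if pt.2 ≤ X 0 pt.1 then F1 pt.1 * G pt.1 else F0 pt.1 * G pt.1)|) / 2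
        by_cases hc : pt.2 ≤ X 0 pt.1
        · simp only [if_pos hc]; exact min_mul_form _ _
        · simp only [if_neg hc]; exact min_mul_form _ _
      rw [hid]; exact hW2
    · have h3 : Integrable (fun pt : Ω × ℝ => (if pt.2 ≤ X 0 pt.1 then (1:ℝ) else 0)
          * ((WAB pt + rsgn (G pt.1) * |WAB pt|) / 2)) P :=
        Integrable.bdd_mul hW1 hDaesm (c := 1) (Filter.Eventually.of_forall hDbd)
      have hid : (fun pt : Ω × ℝ => if pt.2 ≤ X 0 pt.1 then max (F1 pt.1) 0 * G pt.1 else 0)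
          = fun pt : Ω × ℝ => (if pt.2 ≤ X 0 pt.1 then (1:ℝ) else 0)
            * ((WAB pt + rsgn (G pt.1) * |WAB pt|) / 2) := by
        funext pt
        show _ = (if pt.2 ≤ X 0 pt.1 then (1:ℝ) else 0)
          * (((if pt.2 ≤ X 0 pt.1 then F1 pt.1 * G pt.1 else F0 pt.1 * G pt.1)
          + rsgn (G pt.1) * |(if pt.2 ≤ X 0 pt.1 then F1 pt.1 * G pt.1 else F0 pt.1 * G pt.1)|) / 2)
        by_cases hc : pt.2 ≤ X 0 pt.1
        · simp only [if_pos hc, one_mul]; exact max_mul_form _ _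
        · simp only [if_neg hc, zero_mul]
      rw [hid]; exact h3
    · have h4 : Integrable (fun pt : Ω × ℝ => (1 - if pt.2 ≤ X 0 pt.1 then (1:ℝ) else 0)
          * ((WAB pt - rsgn (G pt.1) * |WAB pt|) / 2)) P :=
        Integrable.bdd_mul hW2 (aestronglyMeasurable_const.sub hDaesm) (c := 1) (Filter.Eventually.of_forall hDbd')
      have hid : (fun pt : Ω × ℝ => if pt.2 ≤ X 0 pt.1 then 0 else min (F0 pt.1) 0 * G pt.1)
          = fun pt : Ω × ℝ => (1 - if pt.2 ≤ X 0 pt.1 then (1:ℝ) else 0)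
            * ((WAB pt - rsgn (G pt.1) * |WAB pt|) / 2) := by
        funext pt
        show _ = (1 - if pt.2 ≤ X 0 pt.1 then (1:ℝ) else 0)
          * (((if pt.2 ≤ X 0 pt.1 then F1 pt.1 * G pt.1 else F0 pt.1 * G pt.1)
          - rsgn (G pt.1) * |(if pt.2 ≤ X 0 pt.1 then F1 pt.1 * G pt.1 else F0 pt.1 * G pt.1)|) / 2)
        by_cases hc : pt.2 ≤ X 0 pt.1
        · simp only [if_pos hc]; ring
        · simp only [if_neg hc, sub_zero, one_mul]; exact min_mul_form _ _
      rw [hid]; exact h4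
  by_cases hRint : Integrable WAB P
  · -- the product f·g is integrable on the product space
    obtain ⟨hCGint, hCGeq0⟩ := hslice (fun ω => F1 ω * G ω) (fun ω => F0 ω * G ω)
      (fun ω => C ω * G ω)
      (Filter.Eventually.of_forall fun ω hx => by
        show X 0 ω * (F1 ω * G ω) + (1 - X 0 ω) * (F0 ω * G ω) = C ω * G ω
        rw [hCeq ω, cl_eq hx]; ring)
      (by exact hRint)
    have hCGeq : ∫ ω, C ω * G ω ∂μ = ∫ pt, WAB pt ∂P := hCGeq0
    rw [← hCGeq]
    by_cases hAint : Integrable WA P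
    · obtain ⟨hCint, hCeqI0⟩ := hslice F1 F0 C
        (Filter.Eventually.of_forall fun ω hx => by
          show X 0 ω * F1 ω + (1 - X 0 ω) * F0 ω = C ω
          rw [hCeq ω, cl_eq hx])
        (by exact hAint)
      have hCeqI : ∫ ω, C ω ∂μ = ∫ pt, WA pt ∂P := hCeqI0
      rw [← hCeqI]
      exact hnaC
    · rw [integral_undef hAint, zero_mul]
      by_cases hCint : Integrable C μ
      · by_cases hGint : Integrable G μ
        · -- the hard case: derive ∫ G = 0
          obtain ⟨hw1, hw2, hw3, hw4⟩ := hWint hRint hGint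
          obtain ⟨hNpGint, _⟩ := hslice (fun ω => max (F1 ω) 0 * G ω)
            (fun ω => max (F0 ω) 0 * G ω) (fun ω => Np ω * G ω)
            (Filter.Eventually.of_forall fun ω hx => by
              show X 0 ω * (max (F1 ω) 0 * G ω) + (1 - X 0 ω) * (max (F0 ω) 0 * G ω) = Np ω * G ω
              rw [hNpeq ω, cl_eq hx]; ring) hw1
          obtain ⟨hNmGint, _⟩ := hslice (fun ω => min (F1 ω) 0 * G ω)
            (fun ω => min (F0 ω) 0 * G ω) (fun ω => Nm ω * G ω)
            (Filter.Eventually.of_forall fun ω hx => by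
              show X 0 ω * (min (F1 ω) 0 * G ω) + (1 - X 0 ω) * (min (F0 ω) 0 * G ω) = Nm ω * G ω
              rw [hNmeq ω, cl_eq hx]; ring) hw2
          obtain ⟨hA1Gint, _⟩ := hslice (fun ω => max (F1 ω) 0 * G ω) (fun ω => (0:ℝ))
            (fun ω => A1 ω * G ω)
            (Filter.Eventually.of_forall fun ω hx => by
              show X 0 ω * (max (F1 ω) 0 * G ω) + (1 - X 0 ω) * 0 = A1 ω * G ω
              rw [hA1eq ω, cl_eq hx]; ring) hw3
          obtain ⟨hB0Gint, _⟩ := hslice (fun ω => (0:ℝ)) (fun ω => min (F0 ω) 0 * G ω)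
            (fun ω => B0 ω * G ω)
            (Filter.Eventually.of_forall fun ω hx => by
              show X 0 ω * 0 + (1 - X 0 ω) * (min (F0 ω) 0 * G ω) = B0 ω * G ω
              rw [hB0eq ω, cl_eq hx]; ring) hw4
          have hbzero : ∫ ω, G ω ∂μ = 0 := by
            by_cases hNpint : Integrable Np μ
            · by_cases hNmint : Integrable Nm μ
              · by_cases hA1m : AEStronglyMeasurable A1 μ
                · by_cases hB0m : AEStronglyMeasurable B0 μ
                  · exfalso
                    apply hAint
                    -- companions of A1 and B0 are a.e. strongly measurable
                    have hB1m : AEStronglyMeasurable (fun ω => cl (X 0 ω) * min (F1 ω) 0) μ := by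
                      have heq : (fun ω => cl (X 0 ω) * min (F1 ω) 0)
                          = fun ω => Nm ω - B0 ω := by
                        funext ω; rw [hNmeq ω, hB0eq ω]; ring
                      rw [heq]
                      exact hNmint.aestronglyMeasurable.sub hB0m
                    have hA0m : AEStronglyMeasurable (fun ω => (1 - cl (X 0 ω)) * max (F0 ω) 0) μ := by
                      have heq : (fun ω => (1 - cl (X 0 ω)) * max (F0 ω) 0)
                          = fun ω => Np ω - A1 ω := by
                        funext ω; rw [hNpeq ω, hA1eq ω]; ring
                      rw [heq]
                      exact hNpint.aestronglyMeasurable.sub hA1m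
                    have hclm : Measurable fun ω => cl (X 0 ω) := cl_measurable.comp (hXmeas 0)
                    have hx1m : AEStronglyMeasurable (fun ω => cl (X 0 ω) * F1 ω) μ := by
                      have heq : (fun ω => cl (X 0 ω) * F1 ω)
                          = fun ω => A1 ω + cl (X 0 ω) * min (F1 ω) 0 := by
                        funext ω
                        rw [hA1eq ω]
                        have h1 : max (F1 ω) 0 + min (F1 ω) 0 = F1 ω := max_min_add _
                        linear_combination (-(cl (X 0 ω))) * h1
                      rw [heq]
                      exact hA1m.add hB1m
                    have hx0m : AEStronglyMeasurable (fun ω => (1 - cl (X 0 ω)) * F0 ω) μ := by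
                      have heq : (fun ω => (1 - cl (X 0 ω)) * F0 ω)
                          = fun ω => (1 - cl (X 0 ω)) * max (F0 ω) 0 + B0 ω := by
                        funext ω
                        rw [hB0eq ω]
                        have h1 : max (F0 ω) 0 + min (F0 ω) 0 = F0 ω := max_min_add _
                        linear_combination (-(1 - cl (X 0 ω))) * h1
                      rw [heq]
                      exact hA0m.add hB0m
                    have hE1m : AEStronglyMeasurable (fun ω => if 0 < cl (X 0 ω) then F1 ω else 0) μ := by
                      have heq : (fun ω => if 0 < cl (X 0 ω) then F1 ω else 0)
                          = fun ω => (if 0 < cl (X 0 ω) then (cl (X 0 ω))⁻¹ else 0)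
                            * (cl (X 0 ω) * F1 ω) := by
                        funext ω
                        by_cases h : 0 < cl (X 0 ω)
                        · rw [if_pos h, if_pos h, ← mul_assoc, inv_mul_cancel₀ (ne_of_gt h), one_mul]
                        · rw [if_neg h, if_neg h, zero_mul]
                      rw [heq]
                      refine AEStronglyMeasurable.mul ?_ hx1m
                      exact (Measurable.ite (measurableSet_lt measurable_const hclm)
                        hclm.inv measurable_const).aestronglyMeasurable
                    have hE0m : AEStronglyMeasurable (fun ω => if cl (X 0 ω) < 1 then F0 ω else 0) μ := by
                      have heq : (fun ω => if cl (X 0 ω) < 1 then F0 ω else 0)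
                          = fun ω => (if cl (X 0 ω) < 1 then (1 - cl (X 0 ω))⁻¹ else 0)
                            * ((1 - cl (X 0 ω)) * F0 ω) := by
                        funext ω
                        by_cases h : cl (X 0 ω) < 1
                        · rw [if_pos h, if_pos h, ← mul_assoc,
                            inv_mul_cancel₀ (by intro h2; rw [sub_eq_zero] at h2; linarith), one_mul]
                        · rw [if_neg h, if_neg h, zero_mul]
                      rw [heq]
                      refine AEStronglyMeasurable.mul ?_ hx0m
                      exact (Measurable.ite (measurableSet_lt hclm measurable_const)
                        (measurable_const.sub hclm).inv measurable_const).aestronglyMeasurable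
                    have hWAaesm : AEStronglyMeasurable WA P := by
                      have hrep : (fun pt : Ω × ℝ =>
                          (if pt.2 ≤ X 0 pt.1 then (1:ℝ) else 0)
                            * (if 0 < cl (X 0 pt.1) then F1 pt.1 else 0)
                          + (1 - if pt.2 ≤ X 0 pt.1 then (1:ℝ) else 0)
                            * (if cl (X 0 pt.1) < 1 then F0 pt.1 else 0)) =ᵐ[P] WA := by
                        filter_upwards [ae_fst hX0, ae_snd_mem, ae_snd_ne] with pt hx hu hu0
                        show _ = if pt.2 ≤ X 0 pt.1 then F1 pt.1 else F0 pt.1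
                        by_cases hc : pt.2 ≤ X 0 pt.1
                        · have hpos : 0 < cl (X 0 pt.1) := by
                            rw [cl_eq hx]
                            have h2 : 0 < pt.2 := lt_of_le_of_ne hu.1 (Ne.symm hu0)
                            linarith
                          rw [if_pos hc, if_pos hc, if_pos hpos]; ring
                        · have hlt : cl (X 0 pt.1) < 1 := by
                            rw [cl_eq hx]
                            push_neg at hc
                            have := hu.2
                            linarith
                          rw [if_neg hc, if_neg hc, if_pos hlt]; ring
                      refine AEStronglyMeasurable.congr ?_ hrep
                      exact (hDaesm.mul (hE1m.comp_quasiMeasurePreserving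
                          Measure.quasiMeasurePreserving_fst)).add
                        ((aestronglyMeasurable_const.sub hDaesm).mul
                          (hE0m.comp_quasiMeasurePreserving Measure.quasiMeasurePreserving_fst))
                    apply (MeasureTheory.integrable_prod_iff hWAaesm).2
                    constructor
                    · exact Filter.Eventually.of_forall fun ω =>
                        (by exact slice_integrable (X 0 ω) (F1 ω) (F0 ω) :
                          Integrable (fun u => WA (ω, u)) ν01)
                    · have hnorm : (fun ω => ∫ u, ‖WA (ω, u)‖ ∂ν01)
                          =ᵐ[μ] fun ω => Np ω - Nm ω := by
                        filter_upwards [hX0] with ω hx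
                        have h1 : (fun u : ℝ => ‖WA (ω, u)‖)
                            = fun u => if u ≤ X 0 ω then |F1 ω| else |F0 ω| := by
                          funext u
                          show ‖(if u ≤ X 0 ω then F1 ω else F0 ω)‖ = _
                          by_cases hc : u ≤ X 0 ω
                          · rw [if_pos hc, if_pos hc, Real.norm_eq_abs]
                          · rw [if_neg hc, if_neg hc, Real.norm_eq_abs]
                        show (∫ u, ‖WA (ω, u)‖ ∂ν01) = Np ω - Nm ω
                        rw [h1, slice_integral hx, hNpeq ω, hNmeq ω, cl_eq hx,
                          abs_eq_max_sub_min (F1 ω), abs_eq_max_sub_min (F0 ω)]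
                        ring
                      exact (hNpint.sub hNmint).congr hnorm.symm
                  · exact shift_zero μ hNA hS'T (MMf_mono hf) hg (MMf_det h0S' hfS') hgT
                      (fun h2 => hB0m (show AEStronglyMeasurable B0 μ from h2.aestronglyMeasurable))
                      hGint hB0Gint
                · exact shift_zero μ hNA hS'T (MPf_mono hf) hg (MPf_det h0S' hfS') hgT
                    (fun h2 => hA1m (show AEStronglyMeasurable A1 μ from h2.aestronglyMeasurable))
                    hGint hA1Gint
              · exact shift_zero μ hNA hS'T (EXT_mono hfmin) hg (EXT_det h0S' hfS'min) hgT
                  hNmint hGint hNmGint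
            · exact shift_zero μ hNA hS'T (EXT_mono hfmax) hg (EXT_det h0S' hfS'max) hgT
                hNpint hGint hNpGint
          calc ∫ ω, C ω * G ω ∂μ ≤ (∫ ω, C ω ∂μ) * ∫ ω, G ω ∂μ := hnaC
            _ = 0 := by rw [hbzero, mul_zero]
        · calc ∫ ω, C ω * G ω ∂μ ≤ (∫ ω, C ω ∂μ) * ∫ ω, G ω ∂μ := hnaC
            _ = 0 := by rw [integral_undef hGint, mul_zero]
      · calc ∫ ω, C ω * G ω ∂μ ≤ (∫ ω, C ω ∂μ) * ∫ ω, G ω ∂μ := hnaC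
          _ = 0 := by rw [integral_undef hCint, zero_mul]
  · rw [integral_undef hRint]
    by_cases hAint : Integrable WA P
    · by_cases hGint : Integrable G μ
      · exfalso
        apply hRint
        have hGf : AEStronglyMeasurable (fun pt : Ω × ℝ => G pt.1) P :=
          hGint.aestronglyMeasurable.comp_quasiMeasurePreserving
            Measure.quasiMeasurePreserving_fst
        have hWABaesm : AEStronglyMeasurable WAB P := by
          have heq : (fun pt : Ω × ℝ => WA pt * G pt.1) = WAB := by
            funext pt
            show (if pt.2 ≤ X 0 pt.1 then F1 pt.1 else F0 pt.1) * G pt.1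
              = if pt.2 ≤ X 0 pt.1 then F1 pt.1 * G pt.1 else F0 pt.1 * G pt.1
            by_cases hc : pt.2 ≤ X 0 pt.1 <;> simp [hc]
          rw [← heq]
          exact hAint.aestronglyMeasurable.mul hGf
        have hW5 : Integrable (fun pt : Ω × ℝ => if pt.2 ≤ X 0 pt.1 then max (F1 pt.1) 0
            else max (F0 pt.1) 0) P := by
          have heq : (fun pt : Ω × ℝ => if pt.2 ≤ X 0 pt.1 then max (F1 pt.1) 0
              else max (F0 pt.1) 0) = fun pt => (WA pt + |WA pt|) / 2 := by
            funext pt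
            show _ = ((if pt.2 ≤ X 0 pt.1 then F1 pt.1 else F0 pt.1)
              + |(if pt.2 ≤ X 0 pt.1 then F1 pt.1 else F0 pt.1)|) / 2
            by_cases hc : pt.2 ≤ X 0 pt.1
            · simp only [if_pos hc]; exact max_form _
            · simp only [if_neg hc]; exact max_form _
          rw [heq]
          exact (hAint.add hAint.abs).div_const 2
        have hW6 : Integrable (fun pt : Ω × ℝ => if pt.2 ≤ X 0 pt.1 then min (F1 pt.1) 0
            else min (F0 pt.1) 0) P := by
          have heq : (fun pt : Ω × ℝ => if pt.2 ≤ X 0 pt.1 then min (F1 pt.1) 0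
              else min (F0 pt.1) 0) = fun pt => (WA pt - |WA pt|) / 2 := by
            funext pt
            show _ = ((if pt.2 ≤ X 0 pt.1 then F1 pt.1 else F0 pt.1)
              - |(if pt.2 ≤ X 0 pt.1 then F1 pt.1 else F0 pt.1)|) / 2
            by_cases hc : pt.2 ≤ X 0 pt.1
            · simp only [if_pos hc]; exact min_form _
            · simp only [if_neg hc]; exact min_form _
          rw [heq]
          exact (hAint.sub hAint.abs).div_const 2
        obtain ⟨hNpint, _⟩ := hslice (fun ω => max (F1 ω) 0) (fun ω => max (F0 ω) 0) Np
          (Filter.Eventually.of_forall fun ω hx => by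
            show X 0 ω * max (F1 ω) 0 + (1 - X 0 ω) * max (F0 ω) 0 = Np ω
            rw [hNpeq ω, cl_eq hx]) hW5
        obtain ⟨hNmint, _⟩ := hslice (fun ω => min (F1 ω) 0) (fun ω => min (F0 ω) 0) Nm
          (Filter.Eventually.of_forall fun ω hx => by
            show X 0 ω * min (F1 ω) 0 + (1 - X 0 ω) * min (F0 ω) 0 = Nm ω
            rw [hNmeq ω, cl_eq hx]) hW6
        have hNpG : Integrable (fun ω => Np ω * G ω) μ :=
          key_int μ hNA hS'T (EXT_mono hfmax) hg (EXT_det h0S' hfS'max) hgT hNpint hGint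
        have hNmG : Integrable (fun ω => Nm ω * G ω) μ :=
          key_int μ hNA hS'T (EXT_mono hfmin) hg (EXT_det h0S' hfS'min) hgT hNmint hGint
        apply (MeasureTheory.integrable_prod_iff hWABaesm).2
        constructor
        · exact Filter.Eventually.of_forall fun ω =>
            (by exact slice_integrable (X 0 ω) (F1 ω * G ω) (F0 ω * G ω) :
              Integrable (fun u => WAB (ω, u)) ν01)
        · have hnorm : (fun ω => ∫ u, ‖WAB (ω, u)‖ ∂ν01)
              =ᵐ[μ] fun ω => |Np ω * G ω| + |Nm ω * G ω| := by
            filter_upwards [hX0] with ω hx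
            have h1 : (fun u : ℝ => ‖WAB (ω, u)‖)
                = fun u => if u ≤ X 0 ω then |F1 ω * G ω| else |F0 ω * G ω| := by
              funext u
              show ‖(if u ≤ X 0 ω then F1 ω * G ω else F0 ω * G ω)‖ = _
              by_cases hc : u ≤ X 0 ω
              · rw [if_pos hc, if_pos hc, Real.norm_eq_abs]
              · rw [if_neg hc, if_neg hc, Real.norm_eq_abs]
            have hNpnn : 0 ≤ Np ω := by
              rw [hNpeq ω]
              have h2 := cl_nonneg (X 0 ω)
              have h3 := cl_le_one (X 0 ω)
              have h4 : (0:ℝ) ≤ max (F1 ω) 0 := le_max_right _ _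
              have h5 : (0:ℝ) ≤ max (F0 ω) 0 := le_max_right _ _
              nlinarith
            have hNmnp : Nm ω ≤ 0 := by
              rw [hNmeq ω]
              have h2 := cl_nonneg (X 0 ω)
              have h3 := cl_le_one (X 0 ω)
              have h4 : min (F1 ω) 0 ≤ 0 := min_le_right _ _
              have h5 : min (F0 ω) 0 ≤ 0 := min_le_right _ _
              nlinarith
            show (∫ u, ‖WAB (ω, u)‖ ∂ν01) = |Np ω * G ω| + |Nm ω * G ω|
            rw [h1, slice_integral hx]
            simp only [abs_mul]
            rw [abs_of_nonneg hNpnn, abs_of_nonpos hNmnp, hNpeq ω, hNmeq ω, cl_eq hx,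
              abs_eq_max_sub_min (F1 ω), abs_eq_max_sub_min (F0 ω)]
            ring
          exact (hNpG.abs.add hNmG.abs).congr hnorm.symm
      · rw [integral_undef hGint, mul_zero]
    · rw [integral_undef hAint, zero_mul]

end NAaux

/-- If `(X 0, X 1, …, X n)` are NA with `X 0 ∈ [0,1]` a.s., then replacing `X 0`
by an independent Bernoulli with (conditional) success probability `X 0` —
realized via an independent uniform `u ∈ [0,1]` on the product space, with
`Y (ω, u) = 1` iff `u ≤ X 0 ω` — preserves negative association. -/
theorem stmt_14 {Ω : Type*} [MeasurableSpace Ω] (μ : Measure Ω) [IsProbabilityMeasure μ]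
    (n : ℕ) (X : Fin (n + 1) → Ω → ℝ) (hXmeas : ∀ i, Measurable (X i))
    (hNA : NegAssoc μ X)
    (hX0 : ∀ᵐ ω ∂μ, X 0 ω ∈ Set.Icc (0 : ℝ) 1) :
    NegAssoc (μ.prod (volume.restrict (Set.Icc (0 : ℝ) 1)))
      (fun i (p : Ω × ℝ) =>
        if i = 0 then (if p.2 ≤ X 0 p.1 then (1 : ℝ) else 0) else X i p.1) := by
  intro S T hST f g hf hg hfS hgT
  by_cases h0T : (0 : Fin (n+1)) ∈ T
  · have h0S : (0 : Fin (n+1)) ∉ S := fun h => (Finset.disjoint_left.mp hST h) h0T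
    have hmain := NAaux.main_aux μ n X hXmeas hNA hX0 T S hST.symm h0S g f hg hf hgT hfS
    have hcomm : ∫ pt, g (fun i => NAaux.Zb X i pt) * f (fun i => NAaux.Zb X i pt)
          ∂(μ.prod NAaux.ν01)
        = ∫ pt, f (fun i => NAaux.Zb X i pt) * g (fun i => NAaux.Zb X i pt)
          ∂(μ.prod NAaux.ν01) :=
      integral_congr_ae (Filter.Eventually.of_forall fun pt => mul_comm _ _)
    show (∫ pt, f (fun i => NAaux.Zb X i pt) * g (fun i => NAaux.Zb X i pt)
        ∂(μ.prod NAaux.ν01)) ≤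
      (∫ pt, f (fun i => NAaux.Zb X i pt) ∂(μ.prod NAaux.ν01)) *
        ∫ pt, g (fun i => NAaux.Zb X i pt) ∂(μ.prod NAaux.ν01)
    rw [← hcomm, mul_comm]
    exact hmain
  · exact NAaux.main_aux μ n X hXmeas hNA hX0 S T hST h0T f g hf hg hfS hgT
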